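/- (Orthogonality of the efficient score to all nuisance scores: adaptivity of the two-sample model.) In the one-sample representation of the two-sample model, for every measurable b : ℝ → ℝ with ∫ b(x)² g(x) dx < ∞ (in particular for every b in the tangent set, i.e., with ∫ b g = 0 and ∫ x b(x) g(x) dx = 0), one has E[ (Z·b(U−μ) + (1−Z)·b(U−μ−Δ)) · l*(Z,U) ] = 0. -/

import Mathlib

open MeasureTheory

noncomputable section

/-- `f` is a probability density on `ℝ`. -/
def IsProbDensity (f : ℝ → ℝ) : Prop :=
  (∀ x, 0 ≤ f x) ∧ Integrable f ∧ ∫ x, f x = 1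

/-- The joint law of `(Z,U)` in the one-sample representation of the two-sample model:
`Z ~ Bernoulli(λ)`; conditionally on `Z = 1`, `U` has density `g(·−μ)`; conditionally on
`Z = 0`, `U` has density `g(·−μ−Δ)`. -/
def jointLaw (l μ Δ : ℝ) (g : ℝ → ℝ) : Measure (ℝ × ℝ) :=
  (ENNReal.ofReal l) •
      ((Measure.dirac (1 : ℝ)).prod
        (volume.withDensity fun u => ENNReal.ofReal (g (u - μ)))) +
    (ENNReal.ofReal (1 - l)) •
      ((Measure.dirac (0 : ℝ)).prod
        (volume.withDensity fun u => ENNReal.ofReal (g (u - μ - Δ))))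

/-- Score for `Δ`: `l_Δ(z,u) = −(1−z)·s(u−μ−Δ)`. -/
def scoreDelta (s : ℝ → ℝ) (μ Δ : ℝ) (z u : ℝ) : ℝ := -(1 - z) * s (u - μ - Δ)

/-- Score for `μ`: `l_μ(z,u) = −z·s(u−μ) − (1−z)·s(u−μ−Δ)`. -/
def scoreMu (s : ℝ → ℝ) (μ Δ : ℝ) (z u : ℝ) : ℝ :=
  -z * s (u - μ) - (1 - z) * s (u - μ - Δ)

/-- Score for `λ`: `l_λ(z,u) = z/λ − (1−z)/(1−λ)`. -/
def scoreLambda (l : ℝ) (z : ℝ) : ℝ := z / l - (1 - z) / (1 - l)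

/-- The efficient score `l*(z,u) = z(1−λ)·s(u−μ) − λ(1−z)·s(u−μ−Δ)`. -/
def scoreStar (s : ℝ → ℝ) (l μ Δ : ℝ) (z u : ℝ) : ℝ :=
  z * (1 - l) * s (u - μ) - l * (1 - z) * s (u - μ - Δ)

lemma g'_aesm (g g' : ℝ → ℝ) (hg : IsProbDensity g)
    (hAC : ∀ a c : ℝ, g c - g a = ∫ x in a..c, g' x) :
    AEStronglyMeasurable g' (volume : Measure ℝ) := by
  obtain ⟨hg0, hgi, hg1⟩ := hg
  have key : ∀ x : ℝ, ∃ q r : ℚ, (q : ℝ) < x ∧ x < (r : ℝ) ∧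
      IntegrableOn g' (Set.Ioc (q : ℝ) (r : ℝ)) volume := by
    intro x
    by_contra h
    push_neg at h
    have hconst : ∀ a c : ℝ, a < x → x < c → g c = g a := by
      intro a c ha hc
      obtain ⟨q, hq1, hq2⟩ := exists_rat_btwn ha
      obtain ⟨r, hr1, hr2⟩ := exists_rat_btwn hc
      have hbad : ¬ IntegrableOn g' (Set.Ioc (q:ℝ) (r:ℝ)) volume := h q r hq2 hr1
      have hbad2 : ¬ IntegrableOn g' (Set.Ioc a c) volume := fun hI =>
        hbad (hI.mono_set (Set.Ioc_subset_Ioc hq1.le hr2.le))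
      have hac : a < c := lt_trans ha hc
      have h2 := hAC a c
      rw [intervalIntegral.integral_of_le hac.le, integral_undef hbad2] at h2
      linarith
    set κ := g (x - 1) with hκ
    have hgk : ∀ y : ℝ, y ≠ x → g y = κ := by
      intro y hy
      rcases lt_or_gt_of_ne hy with h1 | h1
      · rw [← hconst y (x+1) h1 (by linarith), hconst (x-1) (x+1) (by linarith) (by linarith)]
      · exact hconst (x-1) y (by linarith) h1
    have hx0 : ∀ᵐ y : ℝ ∂volume, y ≠ x := by
      rw [ae_iff]
      simpa using (Real.volume_singleton : volume {x} = 0)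
    have hgae : g =ᵐ[volume] fun _ => κ := by
      filter_upwards [hx0] with y hy using hgk y hy
    have hκ0 : κ = 0 := by
      rcases integrable_const_iff.mp (hgi.congr hgae) with h2 | h2
      · exact h2
      · have h2 := @measure_lt_top _ _ volume h2 Set.univ; rw [Real.volume_univ] at h2; exact absurd h2 (by simp)
    have : (1:ℝ) = 0 := by
      rw [← hg1, integral_congr_ae hgae, hκ0]; simp
    exact one_ne_zero this
  have hcov : (⋃ p : {p : ℚ × ℚ // IntegrableOn g' (Set.Ioc (p.1 : ℝ) (p.2 : ℝ)) volume},
      Set.Ioc ((p.1.1 : ℝ)) ((p.1.2 : ℝ))) = Set.univ := by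
    apply Set.eq_univ_of_forall
    intro x
    obtain ⟨q, r, h1, h2, h3⟩ := key x
    exact Set.mem_iUnion.mpr ⟨⟨(q, r), h3⟩, ⟨h1, h2.le⟩⟩
  have h := aestronglyMeasurable_iUnion_iff.mpr
    (fun p : {p : ℚ × ℚ // IntegrableOn g' (Set.Ioc (p.1 : ℝ) (p.2 : ℝ)) volume} =>
      p.2.aestronglyMeasurable)
  rw [hcov, Measure.restrict_univ] at h
  exact h

/-- **Orthogonality of the efficient score to all nuisance scores (adaptivity).**
In the one-sample representation of the two-sample model, for every measurable `b : ℝ → ℝ`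
with `∫ b² g < ∞` (in particular for every `b` in the tangent set), the nuisance score
`(z,u) ↦ z·b(u−μ) + (1−z)·b(u−μ−Δ)` is orthogonal to `l*` in `L₂(P)`. -/
theorem efficient_score_orthogonal_to_nuisance_scores
    {Ω : Type*} [MeasurableSpace Ω] (P : Measure Ω) [IsProbabilityMeasure P]
    (Z U : Ω → ℝ) (hZ : Measurable Z) (hU : Measurable U)
    (l μ Δ : ℝ) (hl0 : 0 < l) (hl1 : l < 1)
    (g g' : ℝ → ℝ) (hg : IsProbDensity g)
    (hAC : ∀ a c : ℝ, g c - g a = ∫ x in a..c, g' x)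
    (hFI : Integrable fun x => (g' x / g x) ^ 2 * g x)
    (hlaw : P.map (fun ω => (Z ω, U ω)) = jointLaw l μ Δ g)
    (b : ℝ → ℝ) (hb : Measurable b)
    (hb2 : Integrable fun x => (b x) ^ 2 * g x) :
    ∫ ω, (Z ω * b (U ω - μ) + (1 - Z ω) * b (U ω - μ - Δ)) *
        scoreStar (fun x => g' x / g x) l μ Δ (Z ω) (U ω) ∂P = 0 := by
  obtain ⟨hg0, hgi, hg1⟩ := hg
  set s : ℝ → ℝ := fun x => g' x / g x with hs_def
  have hgm : AEMeasurable g (volume : Measure ℝ) := hgi.aemeasurable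
  have hg'm : AEStronglyMeasurable g' (volume : Measure ℝ) := g'_aesm g g' ⟨hg0, hgi, hg1⟩ hAC
  have hsm : AEStronglyMeasurable s (volume : Measure ℝ) :=
    (hg'm.aemeasurable.div hgm).aestronglyMeasurable
  -- integrability of b * s * g
  have hbsg : Integrable (fun x => b x * s x * g x) volume := by
    have hmeas : AEStronglyMeasurable (fun x => b x * s x * g x) volume :=
      ((hb.aemeasurable.mul hsm.aemeasurable).mul hgm).aestronglyMeasurable
    refine Integrable.mono' ((hb2.add hFI).div_const 2) hmeas ?_
    filter_upwards with x
    have h1 : |b x * s x| ≤ ((b x)^2 + (s x)^2)/2 := by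
      nlinarith [sq_nonneg (|b x| - |s x|), sq_abs (b x), sq_abs (s x),
        abs_mul (b x) (s x), abs_nonneg (b x * s x)]
    calc ‖b x * s x * g x‖ = |b x * s x| * g x := by
          rw [Real.norm_eq_abs, abs_mul, abs_of_nonneg (hg0 x)]
      _ ≤ ((b x)^2 + (s x)^2)/2 * g x := mul_le_mul_of_nonneg_right h1 (hg0 x)
      _ = ((b x)^2 * g x + (s x)^2 * g x)/2 := by ring
  -- shift lemmas
  have hshift_s : ∀ c : ℝ, AEStronglyMeasurable (fun u => s (u - c)) (volume : Measure ℝ) :=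
    fun c => hsm.comp_measurePreserving (measurePreserving_sub_right volume c)
  have hshift_int : ∀ c : ℝ, Integrable (fun u => b (u - c) * s (u - c) * g (u - c)) volume :=
    fun c => ((measurePreserving_sub_right volume c).integrable_comp_emb
      (MeasurableEquiv.subRight c).measurableEmbedding).mpr hbsg
  -- density facts
  have hdens : ∀ c : ℝ, AEMeasurable (fun u => (g (u - c)).toNNReal) (volume : Measure ℝ) :=
    fun c => (hgm.comp_quasiMeasurePreserving (measurePreserving_sub_right volume c).quasiMeasurePreserving).real_toNNReal
  have hdens_eq : ∀ c : ℝ, (fun u => ENNReal.ofReal (g (u - c)))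
      = fun u => ((g (u - c)).toNNReal : ENNReal) := fun c => rfl
  -- per-component integral
  have main_shift : ∀ c k : ℝ,
      (∫ u, k * (b (u - c) * s (u - c))
        ∂(volume.withDensity fun u => ENNReal.ofReal (g (u - c))))
      = k * ∫ x, b x * s x * g x := by
    intro c k
    rw [hdens_eq c, integral_withDensity_eq_integral_smul₀ (hdens c)]
    have h1 : (fun u => (g (u - c)).toNNReal • (k * (b (u - c) * s (u - c))))
        = fun u => k * (b (u - c) * s (u - c) * g (u - c)) := by
      funext u
      rw [NNReal.smul_def, Real.coe_toNNReal _ (hg0 _), smul_eq_mul]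
      ring
    rw [h1, integral_const_mul, integral_sub_right_eq_self
      (fun x => b x * s x * g x) c]
  -- per-component integrability
  have int_shift : ∀ c k : ℝ,
      Integrable (fun u => k * (b (u - c) * s (u - c)))
        (volume.withDensity fun u => ENNReal.ofReal (g (u - c))) := by
    intro c k
    rw [hdens_eq c, integrable_withDensity_iff_integrable_smul₀ (hdens c)]
    have h1 : (fun u => (g (u - c)).toNNReal • (k * (b (u - c) * s (u - c))))
        = fun u => k * (b (u - c) * s (u - c) * g (u - c)) := by
      funext u
      rw [NNReal.smul_def, Real.coe_toNNReal _ (hg0 _), smul_eq_mul]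
      ring
    rw [h1]
    exact (hshift_int c).const_mul k
  -- joint function
  have hb_shift : ∀ c : ℝ, Measurable fun u : ℝ => b (u - c) :=
    fun c => hb.comp (measurable_id.sub_const c)
  set ν₁ : Measure ℝ := volume.withDensity fun u => ENNReal.ofReal (g (u - μ)) with hν₁
  set ν₀ : Measure ℝ := volume.withDensity fun u => ENNReal.ofReal (g (u - μ - Δ)) with hν₀
  have hν₀' : ν₀ = volume.withDensity fun u => ENNReal.ofReal (g (u - (μ + Δ))) := by
    rw [hν₀]; congr 1; funext u; rw [sub_sub]
  set F : ℝ × ℝ → ℝ := fun p =>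
    (p.1 * b (p.2 - μ) + (1 - p.1) * b (p.2 - μ - Δ)) * scoreStar s l μ Δ p.1 p.2 with hF_def
  have hF1 : (fun u => F (1, u)) = fun u => (1 - l) * (b (u - μ) * s (u - μ)) := by
    funext u; simp only [hF_def, scoreStar]; ring
  have hF0 : (fun u => F (0, u)) = fun u => (-l) * (b (u - (μ + Δ)) * s (u - (μ + Δ))) := by
    funext u; simp only [hF_def, scoreStar]
    rw [sub_sub]; ring
  -- sections are AESM
  have hsec : ∀ c k : ℝ, AEStronglyMeasurable (fun u => k * (b (u - c) * s (u - c)))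
      (volume.withDensity fun u => ENNReal.ofReal (g (u - c))) := by
    intro c k
    refine AEStronglyMeasurable.mono_ac (withDensity_absolutelyContinuous _ _) ?_
    exact (((hb_shift c).aemeasurable.mul (hshift_s c).aemeasurable).const_mul
      k).aestronglyMeasurable
  have hF1m : AEStronglyMeasurable (F ∘ Prod.mk (1 : ℝ)) ν₁ := by
    have : (F ∘ Prod.mk (1 : ℝ)) = fun u => (1 - l) * (b (u - μ) * s (u - μ)) := hF1
    rw [this]; exact hsec μ (1 - l)
  have hF0m : AEStronglyMeasurable (F ∘ Prod.mk (0 : ℝ)) ν₀ := by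
    have : (F ∘ Prod.mk (0 : ℝ)) = fun u => (-l) * (b (u - (μ + Δ)) * s (u - (μ + Δ))) := hF0
    rw [this, hν₀']; exact hsec (μ + Δ) (-l)
  -- product measures as maps
  have hm1 : (Measure.dirac (1 : ℝ)).prod ν₁ = ν₁.map (Prod.mk (1 : ℝ)) := Measure.dirac_prod _
  have hm0 : (Measure.dirac (0 : ℝ)).prod ν₀ = ν₀.map (Prod.mk (0 : ℝ)) := Measure.dirac_prod _
  have hFm1' : AEStronglyMeasurable F (ν₁.map (Prod.mk (1 : ℝ))) :=
    (measurableEmbedding_prodMk_left (1 : ℝ)).aestronglyMeasurable_map_iff.mpr hF1m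
  have hFm0' : AEStronglyMeasurable F (ν₀.map (Prod.mk (0 : ℝ))) :=
    (measurableEmbedding_prodMk_left (0 : ℝ)).aestronglyMeasurable_map_iff.mpr hF0m
  have hFm1 : AEStronglyMeasurable F ((Measure.dirac (1 : ℝ)).prod ν₁) := hm1 ▸ hFm1'
  have hFm0 : AEStronglyMeasurable F ((Measure.dirac (0 : ℝ)).prod ν₀) := hm0 ▸ hFm0'
  have hFi1 : Integrable F ((Measure.dirac (1 : ℝ)).prod ν₁) := by
    rw [hm1]
    refine (integrable_map_measure hFm1' measurable_prodMk_left.aemeasurable).mpr ?_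
    have h : (F ∘ Prod.mk (1 : ℝ)) = fun u => (1 - l) * (b (u - μ) * s (u - μ)) := hF1
    rw [h, hν₁]; exact int_shift μ (1 - l)
  have hFi0 : Integrable F ((Measure.dirac (0 : ℝ)).prod ν₀) := by
    rw [hm0]
    refine (integrable_map_measure hFm0' measurable_prodMk_left.aemeasurable).mpr ?_
    have h : (F ∘ Prod.mk (0 : ℝ)) = fun u => (-l) * (b (u - (μ + Δ)) * s (u - (μ + Δ))) := hF0
    rw [h, hν₀']; exact int_shift (μ + Δ) (-l)
  have hFjoint : AEStronglyMeasurable F (jointLaw l μ Δ g) := by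
    rw [jointLaw]
    exact aestronglyMeasurable_add_measure_iff.mpr
      ⟨hFm1.smul_measure _, hFm0.smul_measure _⟩
  have hstep : (∫ ω, (Z ω * b (U ω - μ) + (1 - Z ω) * b (U ω - μ - Δ)) *
      scoreStar s l μ Δ (Z ω) (U ω) ∂P) = ∫ p, F p ∂(jointLaw l μ Δ g) := by
    rw [← hlaw]
    exact (integral_map (hZ.prodMk hU).aemeasurable (hlaw ▸ hFjoint)).symm
  rw [hstep]
  have hsplit : ∫ p, F p ∂(jointLaw l μ Δ g)
      = l * ∫ p, F p ∂((Measure.dirac (1 : ℝ)).prod ν₁)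
        + (1 - l) * ∫ p, F p ∂((Measure.dirac (0 : ℝ)).prod ν₀) := by
    rw [jointLaw, integral_add_measure (hFi1.smul_measure ENNReal.ofReal_ne_top)
      (hFi0.smul_measure ENNReal.ofReal_ne_top), integral_smul_measure, integral_smul_measure,
      ENNReal.toReal_ofReal hl0.le, ENNReal.toReal_ofReal (by linarith : (0:ℝ) ≤ 1 - l),
      smul_eq_mul, smul_eq_mul]
  rw [hsplit]
  have hI1 : ∫ p, F p ∂((Measure.dirac (1 : ℝ)).prod ν₁)
      = (1 - l) * ∫ x, b x * s x * g x := by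
    rw [hm1, integral_map measurable_prodMk_left.aemeasurable hFm1', hF1, hν₁]
    exact main_shift μ (1 - l)
  have hI0 : ∫ p, F p ∂((Measure.dirac (0 : ℝ)).prod ν₀)
      = (-l) * ∫ x, b x * s x * g x := by
    rw [hm0, integral_map measurable_prodMk_left.aemeasurable hFm0', hF0, hν₀']
    exact main_shift (μ + Δ) (-l)
  rw [hI1, hI0]
  ring
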